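/- Let C be a switching class of tournaments on a finite vertex set V of size r and let n > r. For a tournament on n labelled vertices chosen uniformly at random, the expected number of r-element subsets W of the vertices such that the induced subtournament on W is isomorphic to some member of C equals C(n,r) · (r!/|Aut(C)|) / 2^{C(r−1,2)}. -/

import Mathlib

def IsTournament {V : Type*} (e : V → V → ℤ) : Prop :=
  (∀ x y : V, e y x = - e x y) ∧ ∀ x y : V, x ≠ y → e x y = 1 ∨ e x y = -1

def gT {V : Type*} (e : V → V → ℤ) : V → V → V → ℤ :=
  fun x y z => e x y * e y z * e z x

open scoped Classical in
noncomputable def switchT {V : Type*} (e : V → V → ℤ) (X : Set V) : V → V → ℤ :=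
  fun x y => if x ∈ X ↔ y ∈ X then e x y else - e x y

def SwitchEquiv {V : Type*} (e₁ e₂ : V → V → ℤ) : Prop :=
  ∃ X : Set V, e₂ = switchT e₁ X

def autG {V : Type*} (g : V → V → V → ℤ) : Set (Equiv.Perm V) :=
  {σ | ∀ x y z, g (σ x) (σ y) (σ z) = g x y z}

/-- The tournament on `Fin n` determined by an independent choice of orientation for each
of the `C(n,2)` edges: for `x < y` the edge is directed from `x` to `y` iff `b` is `true`
on the pair `(x,y)`.  As `b` ranges uniformly over all such choices, this is exactly a
uniformly random tournament on `n` labelled vertices. -/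
def tourOf {n : ℕ} (b : {p : Fin n × Fin n // p.1 < p.2} → Bool) : Fin n → Fin n → ℤ :=
  fun x y =>
    if h : x < y then (if b ⟨(x, y), h⟩ then 1 else -1)
    else if h' : y < x then (if b ⟨(y, x), h'⟩ then -1 else 1)
    else 0

lemma tour_self {V : Type*} {e : V → V → ℤ} (h : IsTournament e) (x : V) : e x x = 0 := by
  have := h.1 x x; omega

lemma switch_tour {V : Type*} {e : V → V → ℤ} (h : IsTournament e) (X : Set V) :
    IsTournament (switchT e X) := by
  constructor
  · intro x y
    unfold switchT
    by_cases hx : x ∈ X <;> by_cases hy : y ∈ X <;> simp [hx, hy, h.1 x y]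
  · intro x y hxy
    unfold switchT
    rcases h.2 x y hxy with h' | h' <;> by_cases hc : (x ∈ X ↔ y ∈ X) <;> simp [hc, h']

lemma gT_switch {V : Type*} (e : V → V → ℤ) (X : Set V) : gT (switchT e X) = gT e := by
  funext x y z
  unfold gT switchT
  by_cases hx : x ∈ X <;> by_cases hy : y ∈ X <;> by_cases hz : z ∈ X <;>
    simp [hx, hy, hz] <;> ring

lemma gT_of_switchEquiv {V : Type*} {e₁ e₂ : V → V → ℤ} (h : SwitchEquiv e₁ e₂) :
    gT e₂ = gT e₁ := by
  obtain ⟨X, rfl⟩ := h; exact gT_switch e₁ X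

set_option maxHeartbeats 1000000 in
lemma switchEquiv_of_gT {V : Type*} {e₁ e₂ : V → V → ℤ} (h₁ : IsTournament e₁)
    (h₂ : IsTournament e₂) (hg : gT e₂ = gT e₁) : SwitchEquiv e₁ e₂ := by
  cases isEmpty_or_nonempty V with
  | inl hV =>
      refine ⟨∅, ?_⟩; funext x y; exact absurd trivial (hV.elim x)
  | inr hV =>
      obtain ⟨v₀⟩ := hV
      refine ⟨{v | e₁ v v₀ ≠ e₂ v v₀}, ?_⟩
      funext x y
      simp only [switchT, Set.mem_setOf_eq]
      by_cases hxy : x = y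
      · rw [hxy, if_pos Iff.rfl, tour_self h₁, tour_self h₂]
      by_cases hx0 : x = v₀
      · rw [hx0] at hxy ⊢
        have hy0 : y ≠ v₀ := fun h => hxy h.symm
        by_cases hyX : e₁ y v₀ = e₂ y v₀
        · rw [if_pos (by simp [hyX, tour_self h₁, tour_self h₂])]
          have a1 := h₁.1 y v₀
          have a2 := h₂.1 y v₀
          omega
        · rw [if_neg (by simp [hyX, tour_self h₁, tour_self h₂])]
          have a1 := h₁.1 y v₀
          have a2 := h₂.1 y v₀
          rcases h₁.2 y v₀ hy0 with h | h <;> rcases h₂.2 y v₀ hy0 with h' | h' <;> omega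
      by_cases hy0 : y = v₀
      · rw [hy0] at hxy ⊢
        by_cases hxX : e₁ x v₀ = e₂ x v₀
        · rw [if_pos (by simp [hxX, tour_self h₁, tour_self h₂])]
          exact hxX.symm
        · rw [if_neg (by simp [hxX, tour_self h₁, tour_self h₂])]
          rcases h₁.2 x v₀ hxy with h | h <;> rcases h₂.2 x v₀ hxy with h' | h' <;> omega
      · have key : e₂ x y * e₂ y v₀ * e₂ v₀ x = e₁ x y * e₁ y v₀ * e₁ v₀ x := by
          have := congrFun (congrFun (congrFun hg x) y) v₀
          simpa [gT] using this
        rw [h₁.1 x v₀, h₂.1 x v₀] at key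
        rcases h₁.2 x v₀ hx0 with e1x | e1x <;> rcases h₂.2 x v₀ hx0 with e2x | e2x <;>
          rcases h₁.2 y v₀ hy0 with e1y | e1y <;> rcases h₂.2 y v₀ hy0 with e2y | e2y <;>
          rcases h₁.2 x y hxy with e1 | e1 <;> rcases h₂.2 x y hxy with e2 | e2 <;>
          simp only [e1x, e2x, e1y, e2y, e1, e2] at key ⊢ <;> revert key <;> norm_num

section SW
variable {V : Type*} (e₁ : V → V → ℤ)

noncomputable def sw (χ : V → Bool) : V → V → ℤ := switchT e₁ {v | χ v = true}

lemma sw_eq_iff (h₁ : IsTournament e₁) {χ μ : V → Bool} :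
    sw e₁ χ = sw e₁ μ ↔ χ = μ ∨ χ = fun v => !(μ v) := by
  constructor
  · intro h
    have hkey : ∀ x y : V, x ≠ y → ((χ x = true ↔ χ y = true) ↔ (μ x = true ↔ μ y = true)) := by
      intro x y hxy
      have := congrFun (congrFun h x) y
      simp only [sw, switchT, Set.mem_setOf_eq] at this
      rcases h₁.2 x y hxy with hv | hv <;>
        by_cases hc : (χ x = true ↔ χ y = true) <;>
        by_cases hd : (μ x = true ↔ μ y = true) <;>
        simp [hc, hd, hv] at this ⊢ <;> omega
    cases isEmpty_or_nonempty V with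
    | inl hV => left; funext v; exact (hV.elim v)
    | inr hV =>
      obtain ⟨v₀⟩ := hV
      by_cases h0 : χ v₀ = μ v₀
      · left
        funext v
        by_cases hv : v = v₀
        · rw [hv, h0]
        · have := hkey v v₀ hv
          cases hχ : χ v <;> cases hμ : μ v <;> cases hχ0 : χ v₀ <;>
            simp_all
      · right
        funext v
        by_cases hv : v = v₀
        · rw [hv]
          cases hχ0 : χ v₀ <;> cases hμ0 : μ v₀ <;> simp_all
        · have := hkey v v₀ hv
          cases hχ : χ v <;> cases hμ : μ v <;> cases hχ0 : χ v₀ <;>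
            cases hμ0 : μ v₀ <;> simp_all
  · rintro (rfl | rfl)
    · rfl
    · funext x y
      simp only [sw, switchT, Set.mem_setOf_eq, Bool.not_eq_true']
      by_cases hx : μ x = true <;> by_cases hy : μ y = true <;> simp [hx, hy]
end SW

section SW2
variable {V : Type*} (e₁ : V → V → ℤ)

open scoped Classical in
lemma switchEquiv_iff_sw {e : V → V → ℤ} : SwitchEquiv e₁ e ↔ ∃ χ, sw e₁ χ = e := by
  constructor
  · rintro ⟨X, rfl⟩
    refine ⟨fun v => if v ∈ X then true else false, ?_⟩
    unfold sw
    congr 1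
    ext v
    by_cases hv : v ∈ X <;> simp [hv]
  · rintro ⟨χ, rfl⟩
    exact ⟨_, rfl⟩

open scoped Classical in
lemma sw_fiber_card [Fintype V] [Nonempty V] (h₁ : IsTournament e₁) (e : V → V → ℤ) :
    (Finset.univ.filter fun χ : V → Bool => sw e₁ χ = e).card
      = if SwitchEquiv e₁ e then 2 else 0 := by
  by_cases he : SwitchEquiv e₁ e
  · rw [if_pos he]
    obtain ⟨μ, rfl⟩ := (switchEquiv_iff_sw e₁).1 he
    have : (Finset.univ.filter fun χ : V → Bool => sw e₁ χ = sw e₁ μ)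
        = {μ, fun v => !(μ v)} := by
      ext χ
      simp only [Finset.mem_filter, Finset.mem_univ, true_and, Finset.mem_insert,
        Finset.mem_singleton]
      exact sw_eq_iff e₁ h₁
    rw [this]
    refine Finset.card_pair ?_
    intro hc
    obtain ⟨v₀⟩ := ‹Nonempty V›
    have := congrFun hc v₀
    simp at this
  · rw [if_neg he]
    rw [Finset.card_eq_zero, Finset.filter_eq_empty_iff]
    intro χ _ hc
    exact he ((switchEquiv_iff_sw e₁).2 ⟨χ, hc⟩)

end SW2

section ENC
variable {r : ℕ}

lemma tourOf_tournament (b : {p : Fin r × Fin r // p.1 < p.2} → Bool) :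
    IsTournament (tourOf b) := by
  constructor
  · intro x y
    unfold tourOf
    rcases lt_trichotomy x y with h | h | h
    · rw [dif_neg (asymm h), dif_pos h, dif_pos h]
      cases b ⟨(x, y), h⟩ <;> simp
    · simp [h, lt_irrefl]
    · rw [dif_pos h, dif_neg (asymm h), dif_pos h]
      cases b ⟨(y, x), h⟩ <;> simp
  · intro x y hxy
    unfold tourOf
    rcases lt_trichotomy x y with h | h | h
    · rw [dif_pos h]; cases b ⟨(x, y), h⟩ <;> simp
    · exact absurd h hxy
    · rw [dif_neg (asymm h), dif_pos h]; cases b ⟨(y, x), h⟩ <;> simp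

def enc (T : Fin r → Fin r → ℤ) : {p : Fin r × Fin r // p.1 < p.2} → Bool :=
  fun q => decide (T q.val.1 q.val.2 = 1)

lemma enc_tourOf (c : {p : Fin r × Fin r // p.1 < p.2} → Bool) : enc (tourOf c) = c := by
  funext q
  obtain ⟨⟨x, y⟩, h⟩ := q
  simp only [enc, tourOf, dif_pos h]
  cases hc : c ⟨(x, y), h⟩ <;> simp

lemma tourOf_enc {T : Fin r → Fin r → ℤ} (hT : IsTournament T) : tourOf (enc T) = T := by
  funext x y
  unfold tourOf enc
  rcases lt_trichotomy x y with h | h | h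
  · rw [dif_pos h]
    rcases hT.2 x y (ne_of_lt h) with hv | hv <;> simp [hv]
  · rw [h, dif_neg (lt_irrefl y), dif_neg (lt_irrefl y), tour_self hT]
  · rw [dif_neg (asymm h), dif_pos h]
    have := hT.1 y x
    rcases hT.2 y x (ne_of_lt h) with hv | hv <;> simp [hv] <;> omega

end ENC

section PT
variable {V : Type*}

def pT (σ : Equiv.Perm V) (e : V → V → ℤ) : V → V → ℤ := fun x y => e (σ x) (σ y)

lemma pT_pT (σ τ : Equiv.Perm V) (e : V → V → ℤ) : pT σ (pT τ e) = pT (τ * σ) e := rfl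

lemma pT_inv_pT (σ : Equiv.Perm V) (e : V → V → ℤ) : pT σ⁻¹ (pT σ e) = e := by
  funext x y; simp [pT]

lemma pT_tournament {e : V → V → ℤ} (h : IsTournament e) (σ : Equiv.Perm V) :
    IsTournament (pT σ e) :=
  ⟨fun x y => h.1 _ _, fun x y hxy => h.2 _ _ (fun hc => hxy (σ.injective hc))⟩

lemma switch_tour' {e : V → V → ℤ} (h : IsTournament e) (X : Set V) :
    IsTournament (switchT e X) := by
  constructor
  · intro x y
    unfold switchT
    by_cases hx : x ∈ X <;> by_cases hy : y ∈ X <;> simp [hx, hy, h.1 x y]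
  · intro x y hxy
    unfold switchT
    rcases h.2 x y hxy with h' | h' <;> by_cases hc : (x ∈ X ↔ y ∈ X) <;> simp [hc, h']

end PT

section COUNT
open scoped Classical

variable {V : Type*} [Fintype V]

lemma switchEquiv_iff_gT {e₁ e : V → V → ℤ} (h₁ : IsTournament e₁) (he : IsTournament e) :
    SwitchEquiv e₁ e ↔ gT e = gT e₁ :=
  ⟨gT_of_switchEquiv, fun h => switchEquiv_of_gT h₁ he h⟩

lemma gT_pT (σ : Equiv.Perm V) (e : V → V → ℤ) (x y z : V) :
    gT (pT σ e) x y z = gT e (σ x) (σ y) (σ z) := rfl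

lemma coset_card {e₁ T : V → V → ℤ} (h₁ : IsTournament e₁) (hT : IsTournament T)
    (τ : Equiv.Perm V) (hτ : SwitchEquiv e₁ (pT τ T)) :
    {σ : Equiv.Perm V | SwitchEquiv e₁ (pT σ T)}.ncard = (autG (gT e₁)).ncard := by
  have hS : gT (pT τ T) = gT e₁ := gT_of_switchEquiv hτ
  have himg : (fun σ => τ⁻¹ * σ) '' {σ : Equiv.Perm V | SwitchEquiv e₁ (pT σ T)}
      = autG (gT e₁) := by
    ext ρ
    simp only [Set.mem_image, Set.mem_setOf_eq]
    constructor
    · rintro ⟨σ, hσ, rfl⟩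
      have hg : gT (pT σ T) = gT e₁ := gT_of_switchEquiv hσ
      intro x y z
      have h2 : pT σ T = pT (τ⁻¹ * σ) (pT τ T) := by
        rw [pT_pT, ← mul_assoc, mul_inv_cancel, one_mul]
      calc gT e₁ ((τ⁻¹ * σ) x) ((τ⁻¹ * σ) y) ((τ⁻¹ * σ) z)
          = gT (pT τ T) ((τ⁻¹ * σ) x) ((τ⁻¹ * σ) y) ((τ⁻¹ * σ) z) := by rw [hS]
        _ = gT (pT (τ⁻¹ * σ) (pT τ T)) x y z := (gT_pT _ _ x y z).symm
        _ = gT (pT σ T) x y z := by rw [← h2]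
        _ = gT e₁ x y z := by rw [hg]
    · intro hρ
      refine ⟨τ * ρ, ?_, by group⟩
      have h2 : pT (τ * ρ) T = pT ρ (pT τ T) := by rw [pT_pT]
      refine switchEquiv_of_gT h₁ (pT_tournament hT _) ?_
      rw [h2]
      funext x y z
      rw [gT_pT]
      rw [congrFun (congrFun (congrFun hS (ρ x)) (ρ y)) (ρ z)]
      exact hρ x y z
  rw [← himg, Set.ncard_image_of_injective _ (mul_right_injective τ⁻¹)]

end COUNT

section GOOD
open scoped Classical
variable {r : ℕ}

lemma pT_cancel {V : Type*} (σ : Equiv.Perm V) (e : V → V → ℤ) : pT σ (pT σ⁻¹ e) = e := by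
  rw [pT_pT, inv_mul_cancel]; rfl

noncomputable def FF (e₁ : Fin r → Fin r → ℤ) :
    Equiv.Perm (Fin r) × (Fin r → Bool) → ({p : Fin r × Fin r // p.1 < p.2} → Bool) :=
  fun a => enc (pT a.1⁻¹ (sw e₁ a.2))

lemma sw_tournament {V : Type*} {e₁ : V → V → ℤ} (h₁ : IsTournament e₁) (χ : V → Bool) :
    IsTournament (sw e₁ χ) := switch_tour' h₁ _

lemma FF_good {e₁ : Fin r → Fin r → ℤ} (h₁ : IsTournament e₁)
    (a : Equiv.Perm (Fin r) × (Fin r → Bool)) :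
    ∃ σ : Equiv.Perm (Fin r), SwitchEquiv e₁ (pT σ (tourOf (FF e₁ a))) := by
  refine ⟨a.1, ?_⟩
  have ht : IsTournament (pT a.1⁻¹ (sw e₁ a.2)) :=
    pT_tournament (sw_tournament h₁ a.2) _
  rw [show FF e₁ a = enc (pT a.1⁻¹ (sw e₁ a.2)) from rfl, tourOf_enc ht, pT_cancel]
  exact (switchEquiv_iff_sw e₁).2 ⟨a.2, rfl⟩

lemma FF_eq_iff {e₁ : Fin r → Fin r → ℤ} (h₁ : IsTournament e₁)
    (σ : Equiv.Perm (Fin r)) (χ : Fin r → Bool) (c : {p : Fin r × Fin r // p.1 < p.2} → Bool) :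
    FF e₁ (σ, χ) = c ↔ sw e₁ χ = pT σ (tourOf c) := by
  have ht : IsTournament (pT σ⁻¹ (sw e₁ χ)) := pT_tournament (sw_tournament h₁ χ) _
  constructor
  · intro h
    have h2 : pT σ⁻¹ (sw e₁ χ) = tourOf c := by
      rw [← tourOf_enc ht, show enc (pT σ⁻¹ (sw e₁ χ)) = FF e₁ (σ, χ) from rfl, h]
    rw [← h2, pT_cancel]
  · intro h
    have h2 : pT σ⁻¹ (sw e₁ χ) = tourOf c := by
      rw [h, pT_pT, mul_inv_cancel]; rfl
    rw [show FF e₁ (σ, χ) = enc (pT σ⁻¹ (sw e₁ χ)) from rfl, h2, enc_tourOf]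

set_option maxHeartbeats 1000000 in
lemma fiber_card (hr : 0 < r) {e₁ : Fin r → Fin r → ℤ} (h₁ : IsTournament e₁)
    (c : {p : Fin r × Fin r // p.1 < p.2} → Bool)
    (hc : ∃ σ : Equiv.Perm (Fin r), SwitchEquiv e₁ (pT σ (tourOf c))) :
    (Finset.univ.filter fun a : Equiv.Perm (Fin r) × (Fin r → Bool) => FF e₁ a = c).card
      = 2 * (autG (gT e₁)).ncard := by
  haveI : Nonempty (Fin r) := ⟨⟨0, hr⟩⟩
  obtain ⟨τ, hτ⟩ := hc
  rw [Finset.card_filter, Fintype.sum_prod_type]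
  have step1 : ∀ σ : Equiv.Perm (Fin r),
      (∑ χ : Fin r → Bool, if FF e₁ (σ, χ) = c then 1 else 0)
        = if SwitchEquiv e₁ (pT σ (tourOf c)) then 2 else 0 := by
    intro σ
    rw [← Finset.card_filter, ← sw_fiber_card e₁ h₁ (pT σ (tourOf c))]
    apply Finset.card_nbij id (fun χ hχ => ?_) (fun a _ b _ h => h) (fun χ hχ => ?_)
    · simp only [Finset.mem_coe, Finset.mem_filter, Finset.mem_univ, true_and] at hχ ⊢
      exact (FF_eq_iff h₁ σ χ c).1 hχ
    · simp only [Finset.coe_filter, Set.mem_setOf_eq, Finset.mem_univ, true_and,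
        Set.mem_image] at hχ ⊢
      exact ⟨χ, (FF_eq_iff h₁ σ χ c).2 hχ, rfl⟩
  rw [Finset.sum_congr rfl (fun σ _ => step1 σ)]
  have step2 : (∑ σ : Equiv.Perm (Fin r),
      if SwitchEquiv e₁ (pT σ (tourOf c)) then (2:ℕ) else 0)
      = 2 * {σ : Equiv.Perm (Fin r) | SwitchEquiv e₁ (pT σ (tourOf c))}.ncard := by
    rw [Set.ncard_eq_toFinset_card', Set.toFinset_setOf, Finset.card_filter, Finset.mul_sum]
    exact Finset.sum_congr rfl (fun σ _ => by split <;> simp)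
  rw [step2, coset_card h₁ (tourOf_tournament c) τ hτ]

lemma good_count (hr : 0 < r) {e₁ : Fin r → Fin r → ℤ} (h₁ : IsTournament e₁) :
    (Finset.univ.filter fun c : {p : Fin r × Fin r // p.1 < p.2} → Bool =>
        ∃ σ : Equiv.Perm (Fin r), SwitchEquiv e₁ (pT σ (tourOf c))).card
      * (2 * (autG (gT e₁)).ncard) = r.factorial * 2 ^ r := by
  classical
  have hmaps : ∀ a : Equiv.Perm (Fin r) × (Fin r → Bool), a ∈ Finset.univ →
      FF e₁ a ∈ (Finset.univ.filter fun c => ∃ σ : Equiv.Perm (Fin r),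
        SwitchEquiv e₁ (pT σ (tourOf c))) := by
    intro a _
    exact Finset.mem_filter.2 ⟨Finset.mem_univ _, FF_good h₁ a⟩
  have hcard := Finset.card_eq_sum_card_fiberwise hmaps
  rw [Finset.sum_congr rfl (fun c hc =>
    fiber_card hr h₁ c (Finset.mem_filter.1 hc).2)] at hcard
  rw [Finset.sum_const, smul_eq_mul] at hcard
  rw [← hcard]
  simp [Finset.card_univ, Fintype.card_perm, Fintype.card_fun]

end GOOD

section CARDI
open scoped Classical

lemma card_I (m : ℕ) : Fintype.card {p : Fin m × Fin m // p.1 < p.2} = m.choose 2 := by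
  classical
  rw [Fintype.card_subtype]
  set L := Finset.univ.filter fun p : Fin m × Fin m => p.1 < p.2 with hL
  set G := Finset.univ.filter fun p : Fin m × Fin m => p.2 < p.1 with hG
  have hLG : L.card = G.card := by
    apply Finset.card_nbij Prod.swap
    · intro p hp
      simp only [hL, hG, Finset.mem_coe, Finset.mem_filter, Finset.mem_univ, true_and] at hp ⊢
      exact hp
    · intro p _ q _ h
      exact Prod.swap_injective h
    · intro p hp
      simp only [hG, Finset.coe_filter, Finset.mem_univ, true_and, Set.mem_setOf_eq] at hp
      refine ⟨p.swap, ?_, Prod.swap_swap p⟩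
      simp only [hL, Finset.coe_filter, Finset.mem_univ, true_and, Set.mem_setOf_eq]
      exact hp
  have hdisj : Disjoint L G := by
    rw [Finset.disjoint_left]
    intro p hp hq
    simp only [hL, hG, Finset.mem_filter, Finset.mem_univ, true_and] at hp hq
    exact absurd hq (asymm hp)
  have hunion : L ∪ G = (Finset.univ : Finset (Fin m)).offDiag := by
    ext p
    simp only [hL, hG, Finset.mem_union, Finset.mem_filter, Finset.mem_univ, true_and,
      Finset.mem_offDiag]
    constructor
    · rintro (h | h)
      · exact ne_of_lt h
      · exact (ne_of_lt h).symm
    · intro h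
      exact Ne.lt_or_gt h
  have hcards : L.card + G.card = m * m - m := by
    rw [← Finset.card_union_of_disjoint hdisj, hunion, Finset.offDiag_card]
    simp [Finset.card_univ]
  have hchoose := Nat.choose_two_right m
  have hmm : m * m - m = m * (m - 1) := by
    cases m with
    | zero => rfl
    | succ k => simp [Nat.succ_sub_one, Nat.mul_sub_one]; ring_nf; omega
  omega

lemma fiber_count {α β : Type*} [Fintype α] [Fintype β] [DecidableEq α] [DecidableEq β]
    {ι : α → β} (hinj : Function.Injective ι) (c : α → Bool) :
    (Finset.univ.filter fun b : β → Bool => b ∘ ι = c).card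
      = 2 ^ (Fintype.card β - Fintype.card α) := by
  classical
  have E : {b : β → Bool // b ∘ ι = c} ≃ ({p : β // p ∉ Set.range ι} → Bool) := by
    refine ⟨fun b p => b.1 p.1, fun g => ⟨fun p => if h : p ∈ Set.range ι then c h.choose
      else g ⟨p, h⟩, ?_⟩, ?_, ?_⟩
    · funext a
      have hr : ι a ∈ Set.range ι := ⟨a, rfl⟩
      simp only [Function.comp_apply, dif_pos hr]
      congr 1
      exact hinj hr.choose_spec
    · intro b
      apply Subtype.ext
      funext p
      by_cases h : p ∈ Set.range ι
      · simp only [dif_pos h]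
        have hb := congrFun b.2 h.choose
        simp only [Function.comp_apply] at hb
        rw [← hb, h.choose_spec]
      · simp only [dif_neg h]
    · intro g
      funext p
      simp only [dif_neg p.2]
  have h1 : (Finset.univ.filter fun b : β → Bool => b ∘ ι = c).card
      = Fintype.card {b : β → Bool // b ∘ ι = c} := (Fintype.card_subtype _).symm
  rw [h1, Fintype.card_congr E, Fintype.card_fun, Fintype.card_bool,
    Fintype.card_subtype_compl]
  congr 2
  exact (Fintype.card_congr (Equiv.ofInjective ι hinj)).symm

end CARDI

section WSEC
open scoped Classical
variable {n r : ℕ}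

noncomputable def rhoW (W : Finset (Fin n)) (hW : W.card = r)
    (b : {p : Fin n × Fin n // p.1 < p.2} → Bool) :
    {p : Fin r × Fin r // p.1 < p.2} → Bool :=
  fun q => b ⟨(W.orderEmbOfFin hW q.val.1, W.orderEmbOfFin hW q.val.2),
    (W.orderEmbOfFin hW).strictMono q.2⟩

lemma tourOf_rhoW (W : Finset (Fin n)) (hW : W.card = r)
    (b : {p : Fin n × Fin n // p.1 < p.2} → Bool) (x y : Fin r) :
    tourOf (rhoW W hW b) x y = tourOf b (W.orderEmbOfFin hW x) (W.orderEmbOfFin hW y) := by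
  set ψ := W.orderEmbOfFin hW
  have hmono := ψ.strictMono
  unfold tourOf rhoW
  rcases lt_trichotomy x y with h | h | h
  · rw [dif_pos h, dif_pos (hmono h)]
  · rw [h, dif_neg (lt_irrefl y), dif_neg (lt_irrefl y), dif_neg (lt_irrefl (ψ y)),
      dif_neg (lt_irrefl (ψ y))]
  · rw [dif_neg (asymm h), dif_pos h, dif_neg (asymm (hmono h)), dif_pos (hmono h)]

lemma cond_iff {e₁ : Fin r → Fin r → ℤ} (W : Finset (Fin n)) (hW : W.card = r)
    (b : {p : Fin n × Fin n // p.1 < p.2} → Bool) :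
    (∃ e : Fin r → Fin r → ℤ, SwitchEquiv e₁ e ∧
        ∃ φ : Fin r → Fin n, Function.Injective φ ∧ (∀ v, φ v ∈ W) ∧
          ∀ x y, tourOf b (φ x) (φ y) = e x y)
      ↔ ∃ σ : Equiv.Perm (Fin r), SwitchEquiv e₁ (pT σ (tourOf (rhoW W hW b))) := by
  set ψ := W.orderEmbOfFin hW with hψ
  constructor
  · rintro ⟨e, he, φ, hinj, hmem, heq⟩
    set φ' : Fin r → {x // x ∈ W} := fun v => ⟨φ v, hmem v⟩ with hφ'
    have hinj' : Function.Injective φ' := fun a b h => hinj (congrArg Subtype.val h)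
    have hbij : Function.Bijective φ' := by
      rw [Fintype.bijective_iff_injective_and_card]
      exact ⟨hinj', by simp [Fintype.card_coe, hW]⟩
    set u : Fin r ≃ {x // x ∈ W} := Equiv.ofBijective φ' hbij with hu
    set σ : Equiv.Perm (Fin r) := u.trans (W.orderIsoOfFin hW).symm.toEquiv with hσ
    have hψσ : ∀ v, ψ (σ v) = φ v := by
      intro v
      have h1 : σ v = (W.orderIsoOfFin hW).symm (φ' v) := rfl
      rw [h1, hψ, ← Finset.coe_orderIsoOfFin_apply, OrderIso.apply_symm_apply]
    refine ⟨σ, ?_⟩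
    have : pT σ (tourOf (rhoW W hW b)) = e := by
      funext x y
      show tourOf (rhoW W hW b) (σ x) (σ y) = e x y
      rw [tourOf_rhoW, hψσ, hψσ, heq]
    rw [this]
    exact he
  · rintro ⟨σ, hσ⟩
    refine ⟨pT σ (tourOf (rhoW W hW b)), hσ, fun v => ψ (σ v),
      fun a b h => σ.injective (ψ.injective h), fun v => Finset.orderEmbOfFin_mem W hW _, ?_⟩
    intro x y
    rw [← tourOf_rhoW]
    rfl

lemma b_count {e₁ : Fin r → Fin r → ℤ} (W : Finset (Fin n)) (hW : W.card = r) :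
    (Finset.univ.filter fun b : {p : Fin n × Fin n // p.1 < p.2} → Bool =>
        ∃ σ : Equiv.Perm (Fin r), SwitchEquiv e₁ (pT σ (tourOf (rhoW W hW b)))).card
      = (Finset.univ.filter fun c : {p : Fin r × Fin r // p.1 < p.2} → Bool =>
          ∃ σ : Equiv.Perm (Fin r), SwitchEquiv e₁ (pT σ (tourOf c))).card
        * 2 ^ (n.choose 2 - r.choose 2) := by
  classical
  set ψ := W.orderEmbOfFin hW
  set ι : {p : Fin r × Fin r // p.1 < p.2} → {p : Fin n × Fin n // p.1 < p.2} :=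
    fun q => ⟨(ψ q.val.1, ψ q.val.2), ψ.strictMono q.2⟩ with hι
  have hinj : Function.Injective ι := by
    rintro ⟨⟨a, b⟩, h⟩ ⟨⟨c, d⟩, h'⟩ hq
    simp only [hι, Subtype.mk.injEq, Prod.mk.injEq] at hq
    exact Subtype.ext (Prod.ext (ψ.injective hq.1) (ψ.injective hq.2))
  have hmaps : ∀ b ∈ (Finset.univ.filter fun b : {p : Fin n × Fin n // p.1 < p.2} → Bool =>
      ∃ σ : Equiv.Perm (Fin r), SwitchEquiv e₁ (pT σ (tourOf (rhoW W hW b)))),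
      rhoW W hW b ∈ (Finset.univ.filter fun c : {p : Fin r × Fin r // p.1 < p.2} → Bool =>
        ∃ σ : Equiv.Perm (Fin r), SwitchEquiv e₁ (pT σ (tourOf c))) := by
    intro b hb
    simp only [Finset.mem_filter, Finset.mem_univ, true_and] at hb ⊢
    exact hb
  rw [Finset.card_eq_sum_card_fiberwise hmaps]
  have hfib : ∀ c ∈ (Finset.univ.filter fun c : {p : Fin r × Fin r // p.1 < p.2} → Bool =>
      ∃ σ : Equiv.Perm (Fin r), SwitchEquiv e₁ (pT σ (tourOf c))),
      ((Finset.univ.filter fun b : {p : Fin n × Fin n // p.1 < p.2} → Bool =>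
        ∃ σ : Equiv.Perm (Fin r), SwitchEquiv e₁ (pT σ (tourOf (rhoW W hW b)))).filter
          fun b => rhoW W hW b = c).card = 2 ^ (n.choose 2 - r.choose 2) := by
    intro c hc
    simp only [Finset.mem_filter, Finset.mem_univ, true_and] at hc
    have hset : ((Finset.univ.filter fun b : {p : Fin n × Fin n // p.1 < p.2} → Bool =>
        ∃ σ : Equiv.Perm (Fin r), SwitchEquiv e₁ (pT σ (tourOf (rhoW W hW b)))).filter
          fun b => rhoW W hW b = c)
        = Finset.univ.filter fun b : {p : Fin n × Fin n // p.1 < p.2} → Bool =>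
            b ∘ ι = c := by
      ext b
      simp only [Finset.mem_filter, Finset.mem_univ, true_and]
      constructor
      · rintro ⟨-, h⟩
        exact h
      · intro h
        have h' : rhoW W hW b = c := h
        exact ⟨by rw [h']; exact hc, h⟩
    rw [hset, fiber_count hinj c, card_I, card_I]
  rw [Finset.sum_congr rfl hfib, Finset.sum_const, smul_eq_mul]

end WSEC

section MAIN
open scoped Classical

lemma choose_two_pred {r : ℕ} (hr : 0 < r) : r.choose 2 = (r - 1).choose 2 + (r - 1) := by
  cases r with
  | zero => exact absurd hr (lt_irrefl 0)
  | succ s => simp [Nat.choose_succ_succ, Nat.choose_one_right, Nat.add_comm]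

set_option maxHeartbeats 1000000 in
theorem mainFin {r n : ℕ} (hr : 0 < r) (hn : r < n) (e₁ : Fin r → Fin r → ℤ)
    (h₁ : IsTournament e₁) :
    (∑ b : {p : Fin n × Fin n // p.1 < p.2} → Bool,
        ({W : Finset (Fin n) | W.card = r ∧
            ∃ e : Fin r → Fin r → ℤ, SwitchEquiv e₁ e ∧
              ∃ φ : Fin r → Fin n, Function.Injective φ ∧ (∀ v, φ v ∈ W) ∧
                ∀ x y, tourOf b (φ x) (φ y) = e x y}.ncard : ℚ)) /
        (2 : ℚ) ^ n.choose 2 =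
      (n.choose r : ℚ) * ((Nat.factorial r : ℚ) / ((autG (gT e₁)).ncard : ℚ)) /
        (2 : ℚ) ^ (r - 1).choose 2 := by
  classical
  set G := (Finset.univ.filter fun c : {p : Fin r × Fin r // p.1 < p.2} → Bool =>
      ∃ σ : Equiv.Perm (Fin r), SwitchEquiv e₁ (pT σ (tourOf c))).card with hG
  set A := (autG (gT e₁)).ncard with hA
  clear_value G A
  -- step: the sum equals (n.choose r) * (G * 2 ^ (n.choose 2 - r.choose 2))
  have hsum : (∑ b : {p : Fin n × Fin n // p.1 < p.2} → Bool,
      ({W : Finset (Fin n) | W.card = r ∧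
          ∃ e : Fin r → Fin r → ℤ, SwitchEquiv e₁ e ∧
            ∃ φ : Fin r → Fin n, Function.Injective φ ∧ (∀ v, φ v ∈ W) ∧
              ∀ x y, tourOf b (φ x) (φ y) = e x y}.ncard)) =
      n.choose r * (G * 2 ^ (n.choose 2 - r.choose 2)) := by
    have hstep1 : ∀ b : {p : Fin n × Fin n // p.1 < p.2} → Bool,
        ({W : Finset (Fin n) | W.card = r ∧
            ∃ e : Fin r → Fin r → ℤ, SwitchEquiv e₁ e ∧
              ∃ φ : Fin r → Fin n, Function.Injective φ ∧ (∀ v, φ v ∈ W) ∧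
                ∀ x y, tourOf b (φ x) (φ y) = e x y}.ncard)
          = ∑ W : Finset (Fin n), (if W.card = r ∧
              ∃ e : Fin r → Fin r → ℤ, SwitchEquiv e₁ e ∧
              ∃ φ : Fin r → Fin n, Function.Injective φ ∧ (∀ v, φ v ∈ W) ∧
                ∀ x y, tourOf b (φ x) (φ y) = e x y then 1 else 0) := by
      intro b
      rw [Set.ncard_eq_toFinset_card', Set.toFinset_setOf, Finset.card_filter]
    rw [Finset.sum_congr rfl fun b _ => hstep1 b, Finset.sum_comm]
    have hinner : ∀ W : Finset (Fin n),
        (∑ b : {p : Fin n × Fin n // p.1 < p.2} → Bool, if W.card = r ∧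
            ∃ e : Fin r → Fin r → ℤ, SwitchEquiv e₁ e ∧
            ∃ φ : Fin r → Fin n, Function.Injective φ ∧ (∀ v, φ v ∈ W) ∧
              ∀ x y, tourOf b (φ x) (φ y) = e x y then 1 else 0)
          = if W.card = r then G * 2 ^ (n.choose 2 - r.choose 2) else 0 := by
      intro W
      by_cases hW : W.card = r
      · rw [if_pos hW]
        have : ∀ b : {p : Fin n × Fin n // p.1 < p.2} → Bool,
            (if W.card = r ∧ ∃ e : Fin r → Fin r → ℤ, SwitchEquiv e₁ e ∧
              ∃ φ : Fin r → Fin n, Function.Injective φ ∧ (∀ v, φ v ∈ W) ∧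
                ∀ x y, tourOf b (φ x) (φ y) = e x y then (1:ℕ) else 0)
            = (if ∃ σ : Equiv.Perm (Fin r), SwitchEquiv e₁ (pT σ (tourOf (rhoW W hW b)))
                then 1 else 0) := by
          intro b
          congr 1
          rw [eq_iff_iff, ← cond_iff W hW b]
          simp [hW]
        rw [Finset.sum_congr rfl fun b _ => this b, ← Finset.card_filter, hG]
        exact b_count W hW
      · rw [if_neg hW]
        apply Finset.sum_eq_zero
        intro b _
        rw [if_neg (fun hc => hW hc.1)]
    rw [Finset.sum_congr rfl fun W _ => hinner W, ← Finset.sum_filter,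
      Finset.sum_const, smul_eq_mul]
    congr 1
    rw [← Fintype.card_subtype, Fintype.card_finset_len, Fintype.card_fin]
  have hsumQ : (∑ b : {p : Fin n × Fin n // p.1 < p.2} → Bool,
      ({W : Finset (Fin n) | W.card = r ∧
          ∃ e : Fin r → Fin r → ℤ, SwitchEquiv e₁ e ∧
            ∃ φ : Fin r → Fin n, Function.Injective φ ∧ (∀ v, φ v ∈ W) ∧
              ∀ x y, tourOf b (φ x) (φ y) = e x y}.ncard : ℚ)) =
      ((n.choose r * (G * 2 ^ (n.choose 2 - r.choose 2)) : ℕ) : ℚ) := by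
    rw [← Nat.cast_sum, hsum]
  rw [hsumQ]
  -- arithmetic
  have hGA : (G : ℚ) * (2 * A) = r.factorial * 2 ^ r := by
    have := good_count hr h₁
    rw [← hG, ← hA] at this
    exact_mod_cast congrArg (Nat.cast : ℕ → ℚ) this
  have hApos : 0 < A := by
    rw [hA, Set.ncard_pos (Set.toFinite _)]
    exact ⟨1, fun x y z => rfl⟩
  have hAne : (A : ℚ) ≠ 0 := Nat.cast_ne_zero.2 hApos.ne'
  have hc2 : r.choose 2 = (r - 1).choose 2 + (r - 1) := choose_two_pred hr
  have hle : r.choose 2 ≤ n.choose 2 := Nat.choose_le_choose 2 hn.le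
  have hsplit : n.choose 2 = (n.choose 2 - r.choose 2) + ((r - 1).choose 2 + (r - 1)) := by
    rw [← hc2, Nat.sub_add_cancel hle]
  have h2 : (2 : ℚ) ^ n.choose 2
      = 2 ^ (n.choose 2 - r.choose 2) * (2 ^ (r - 1).choose 2 * 2 ^ (r - 1)) := by
    rw [← pow_add, ← pow_add, ← hsplit]
  have h3 : (2 : ℚ) ^ r = 2 ^ (r - 1) * 2 := by
    rw [← pow_succ]
    congr 1
    exact (Nat.succ_pred_eq_of_pos hr).symm
  have hGA2 : (G : ℚ) * A = r.factorial * 2 ^ (r - 1) := by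
    have h := good_count hr h₁
    rw [← hG, ← hA] at h
    have h2r : 2 ^ r = 2 ^ (r - 1) * 2 := by
      rw [← pow_succ]
      congr 1
      exact (Nat.succ_pred_eq_of_pos hr).symm
    rw [h2r] at h
    ring_nf at h
    have h5 : G * A = r.factorial * 2 ^ (r - 1) := by
      apply Nat.eq_of_mul_eq_mul_right two_pos
      linarith [h]
    exact_mod_cast congrArg (Nat.cast : ℕ → ℚ) h5
  rw [h2]
  push_cast
  rw [div_eq_div_iff (by positivity) (by positivity)]
  field_simp
  linear_combination (n.choose r : ℚ) * hGA2

end MAIN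

section TRANSPORT
open scoped Classical

lemma switchEquiv_map {V U : Type*} (f : V ≃ U) {e₁ e : V → V → ℤ} (h : SwitchEquiv e₁ e) :
    SwitchEquiv (fun i j => e₁ (f.symm i) (f.symm j)) (fun i j => e (f.symm i) (f.symm j)) := by
  obtain ⟨X, rfl⟩ := h
  refine ⟨f.symm ⁻¹' X, ?_⟩
  funext i j
  simp only [switchT, Set.mem_preimage]

lemma autG_map {V : Type*} [Fintype V] (κ : V ≃ Fin (Fintype.card V)) (e₁ : V → V → ℤ) :
    (autG (gT (fun i j => e₁ (κ.symm i) (κ.symm j)))).ncard = (autG (gT e₁)).ncard := by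
  set e₁' : Fin (Fintype.card V) → Fin (Fintype.card V) → ℤ :=
    fun i j => e₁ (κ.symm i) (κ.symm j) with he₁'
  have himg : (fun σ => κ.permCongr σ) '' autG (gT e₁) = autG (gT e₁') := by
    ext σ'
    simp only [Set.mem_image]
    constructor
    · rintro ⟨σ, hσ, rfl⟩
      intro i j k
      have := hσ (κ.symm i) (κ.symm j) (κ.symm k)
      simpa [gT, he₁', Equiv.permCongr_apply] using this
    · intro h
      refine ⟨κ.symm.permCongr σ', fun x y z => ?_, ?_⟩
      · have := h (κ x) (κ y) (κ z)
        simpa [gT, he₁', Equiv.permCongr_apply] using this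
      · ext i
        simp [Equiv.permCongr_apply]
  rw [← himg, Set.ncard_image_of_injective _ κ.permCongr.injective]

theorem statement5' {V : Type*} [Fintype V] (e₁ : V → V → ℤ) (h₁ : IsTournament e₁)
    (n : ℕ) (hn : Fintype.card V < n) :
    (∑ b : {p : Fin n × Fin n // p.1 < p.2} → Bool,
        ({W : Finset (Fin n) | W.card = Fintype.card V ∧
            ∃ e : V → V → ℤ, SwitchEquiv e₁ e ∧
              ∃ φ : V → Fin n, Function.Injective φ ∧ (∀ v, φ v ∈ W) ∧
                ∀ x y, tourOf b (φ x) (φ y) = e x y}.ncard : ℚ)) /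
        (2 : ℚ) ^ n.choose 2 =
      (n.choose (Fintype.card V) : ℚ) *
        ((Nat.factorial (Fintype.card V) : ℚ) / ((autG (gT e₁)).ncard : ℚ)) /
        (2 : ℚ) ^ (Fintype.card V - 1).choose 2 := by
  classical
  rcases Nat.eq_zero_or_pos (Fintype.card V) with hr | hr
  · -- empty vertex set
    haveI hVempty : IsEmpty V := Fintype.card_eq_zero_iff.1 hr
    have hset : ∀ b : {p : Fin n × Fin n // p.1 < p.2} → Bool,
        {W : Finset (Fin n) | W.card = Fintype.card V ∧
            ∃ e : V → V → ℤ, SwitchEquiv e₁ e ∧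
              ∃ φ : V → Fin n, Function.Injective φ ∧ (∀ v, φ v ∈ W) ∧
                ∀ x y, tourOf b (φ x) (φ y) = e x y} = {∅} := by
      intro b
      ext W
      simp only [Set.mem_setOf_eq, Set.mem_singleton_iff, hr, Finset.card_eq_zero]
      constructor
      · rintro ⟨h, -⟩; exact h
      · rintro rfl
        refine ⟨rfl, e₁, ⟨∅, ?_⟩, fun v => isEmptyElim v, fun a => isEmptyElim a,
          fun v => isEmptyElim v, fun x => isEmptyElim x⟩
        funext x y
        simp [switchT]
    have hsum : (∑ b : {p : Fin n × Fin n // p.1 < p.2} → Bool,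
        ({W : Finset (Fin n) | W.card = Fintype.card V ∧
            ∃ e : V → V → ℤ, SwitchEquiv e₁ e ∧
              ∃ φ : V → Fin n, Function.Injective φ ∧ (∀ v, φ v ∈ W) ∧
                ∀ x y, tourOf b (φ x) (φ y) = e x y}.ncard : ℚ))
        = (2 : ℚ) ^ n.choose 2 := by
      rw [Finset.sum_congr rfl fun b _ => by rw [hset b, Set.ncard_singleton, Nat.cast_one]]
      rw [Finset.sum_const, nsmul_eq_mul, mul_one, Finset.card_univ, Fintype.card_fun,
        Fintype.card_bool, card_I]
      push_cast
      rfl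
    have haut : (autG (gT e₁)).ncard = 1 := by
      have huniv : autG (gT e₁) = Set.univ := by
        ext σ
        simp only [Set.mem_univ, iff_true]
        intro x; exact isEmptyElim x
      rw [huniv, Set.ncard_univ, Nat.card_eq_fintype_card, Fintype.card_perm, hr]
      rfl
    rw [hsum, haut, hr]
    simp [Nat.factorial]
  · -- positive case: transport to Fin (card V)
    set r := Fintype.card V with hrdef
    set κ : V ≃ Fin r := Fintype.equivFin V with hκ
    set e₁' : Fin r → Fin r → ℤ := fun i j => e₁ (κ.symm i) (κ.symm j) with he₁'
    have h₁' : IsTournament e₁' :=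
      ⟨fun x y => h₁.1 _ _, fun x y hxy => h₁.2 _ _ (fun hc => hxy (by
        have := congrArg κ hc; simpa using this))⟩
    have hcond : ∀ (b : {p : Fin n × Fin n // p.1 < p.2} → Bool) (W : Finset (Fin n)),
        (∃ e : V → V → ℤ, SwitchEquiv e₁ e ∧
          ∃ φ : V → Fin n, Function.Injective φ ∧ (∀ v, φ v ∈ W) ∧
            ∀ x y, tourOf b (φ x) (φ y) = e x y)
        ↔ (∃ e : Fin r → Fin r → ℤ, SwitchEquiv e₁' e ∧
          ∃ φ : Fin r → Fin n, Function.Injective φ ∧ (∀ v, φ v ∈ W) ∧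
            ∀ x y, tourOf b (φ x) (φ y) = e x y) := by
      intro b W
      constructor
      · rintro ⟨e, he, φ, hinj, hmem, heq⟩
        exact ⟨fun i j => e (κ.symm i) (κ.symm j), switchEquiv_map κ he, φ ∘ κ.symm,
          hinj.comp κ.symm.injective, fun v => hmem _, fun x y => heq _ _⟩
      · rintro ⟨e, he, φ, hinj, hmem, heq⟩
        have he2 : SwitchEquiv e₁ (fun u v => e (κ u) (κ v)) := by
          have h3 := switchEquiv_map κ.symm he
          have h4 : (fun u v => e₁' (κ.symm.symm u) (κ.symm.symm v)) = e₁ := by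
            funext u v
            simp [he₁']
          rwa [h4] at h3
        exact ⟨fun u v => e (κ u) (κ v), he2, φ ∘ κ, hinj.comp κ.injective,
          fun v => hmem _, fun x y => heq _ _⟩
    have hsets : ∀ b : {p : Fin n × Fin n // p.1 < p.2} → Bool,
        {W : Finset (Fin n) | W.card = Fintype.card V ∧
            ∃ e : V → V → ℤ, SwitchEquiv e₁ e ∧
              ∃ φ : V → Fin n, Function.Injective φ ∧ (∀ v, φ v ∈ W) ∧
                ∀ x y, tourOf b (φ x) (φ y) = e x y}
          = {W : Finset (Fin n) | W.card = r ∧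
            ∃ e : Fin r → Fin r → ℤ, SwitchEquiv e₁' e ∧
              ∃ φ : Fin r → Fin n, Function.Injective φ ∧ (∀ v, φ v ∈ W) ∧
                ∀ x y, tourOf b (φ x) (φ y) = e x y} := by
      intro b
      ext W
      simp only [Set.mem_setOf_eq, ← hrdef]
      exact and_congr_right fun _ => hcond b W
    calc (∑ b : {p : Fin n × Fin n // p.1 < p.2} → Bool,
        ({W : Finset (Fin n) | W.card = Fintype.card V ∧
            ∃ e : V → V → ℤ, SwitchEquiv e₁ e ∧
              ∃ φ : V → Fin n, Function.Injective φ ∧ (∀ v, φ v ∈ W) ∧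
                ∀ x y, tourOf b (φ x) (φ y) = e x y}.ncard : ℚ)) / (2 : ℚ) ^ n.choose 2
        = (∑ b : {p : Fin n × Fin n // p.1 < p.2} → Bool,
          ({W : Finset (Fin n) | W.card = r ∧
            ∃ e : Fin r → Fin r → ℤ, SwitchEquiv e₁' e ∧
              ∃ φ : Fin r → Fin n, Function.Injective φ ∧ (∀ v, φ v ∈ W) ∧
                ∀ x y, tourOf b (φ x) (φ y) = e x y}.ncard : ℚ)) / (2 : ℚ) ^ n.choose 2 := by
          rw [Finset.sum_congr rfl fun b _ => by rw [hsets b]]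
      _ = (n.choose r : ℚ) * ((Nat.factorial r : ℚ) / ((autG (gT e₁')).ncard : ℚ)) /
            (2 : ℚ) ^ (r - 1).choose 2 := mainFin hr hn e₁' h₁'
      _ = (n.choose (Fintype.card V) : ℚ) *
            ((Nat.factorial (Fintype.card V) : ℚ) / ((autG (gT e₁)).ncard : ℚ)) /
            (2 : ℚ) ^ (Fintype.card V - 1).choose 2 := by
          rw [autG_map κ e₁]

end TRANSPORT

/-- let `C` be the switching class of a tournament `e₁` on a finite vertex
set `V` of size `r`, and let `n > r`.  The expected number, over a uniformly random
tournament on `n` labelled vertices, of `r`-element vertex subsets `W` whose induced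
subtournament is isomorphic to some member of `C`, equals
`C(n,r) · (r! / |Aut(C)|) / 2^(C(r-1,2))`. -/
theorem statement5 {V : Type*} [Fintype V] (e₁ : V → V → ℤ) (h₁ : IsTournament e₁)
    (n : ℕ) (hn : Fintype.card V < n) :
    (∑ b : {p : Fin n × Fin n // p.1 < p.2} → Bool,
        ({W : Finset (Fin n) | W.card = Fintype.card V ∧
            ∃ e : V → V → ℤ, SwitchEquiv e₁ e ∧
              ∃ φ : V → Fin n, Function.Injective φ ∧ (∀ v, φ v ∈ W) ∧
                ∀ x y, tourOf b (φ x) (φ y) = e x y}.ncard : ℚ)) /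
        (2 : ℚ) ^ n.choose 2 =
      (n.choose (Fintype.card V) : ℚ) *
        ((Nat.factorial (Fintype.card V) : ℚ) / ((autG (gT e₁)).ncard : ℚ)) /
        (2 : ℚ) ^ (Fintype.card V - 1).choose 2 := by
  exact statement5' e₁ h₁ n hn
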